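/- Let M̄ be a symmetric (k-1)×(k-1) real matrix and let M be the symmetric k×k matrix obtained from M̄ by: subtracting 1 from the (1,1) and (k-1,k-1) entries, replacing the (1,k-1) and (k-1,1) entries (equal to 1 in M̄) by 0, and appending a k-th row and column whose only nonzero entries are M_{1,k} = M_{k-1,k} = 1 and M_{k,k} = -1. Then M is negative definite if and only if M̄ is negative definite. -/

import Mathlib

/-- Pure matrix statement: `Mbar` is a symmetric `(k-1)×(k-1)` real matrix with
`Mbar_{1,k-1} = Mbar_{k-1,1} = 1`, `k ≥ 3`, and `M` is the symmetric `k×k` matrix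
obtained from `Mbar` by subtracting `1` from the `(1,1)` and `(k-1,k-1)` entries,
replacing the `(1,k-1)` and `(k-1,1)` entries by `0`, and appending a `k`-th row and
column whose only nonzero entries are `M_{1,k} = M_{k-1,k} = 1` and `M_{k,k} = -1`.
Then `M` is negative definite iff `Mbar` is negative definite.  (Index `a` is `1`,
index `b` is `k-1`, index `e` is `k`, in 1-based numbering; `cst` is the inclusion.) -/
theorem stmt_9
    (k : ℕ) (hk : 3 ≤ k)
    (Mbar : Matrix (Fin (k - 1)) (Fin (k - 1)) ℝ)
    (M : Matrix (Fin k) (Fin k) ℝ)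
    (hMbarSymm : Mbar.IsSymm) (hMSymm : M.IsSymm)
    (a b : Fin (k - 1)) (ha : (a : ℕ) = 0) (hb : (b : ℕ) = k - 2)
    (e : Fin k) (he : (e : ℕ) = k - 1)
    (cst : Fin (k - 1) → Fin k) (hcst : cst = Fin.castLE (Nat.sub_le k 1))
    (hab : Mbar a b = 1)
    (h0 : ∀ i j : Fin (k - 1),
      ¬((i = a ∨ i = b) ∧ (j = a ∨ j = b)) → M (cst i) (cst j) = Mbar i j)
    (h1 : M (cst a) (cst a) = Mbar a a - 1)
    (h2 : M (cst b) (cst b) = Mbar b b - 1)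
    (h3 : M (cst a) (cst b) = 0)
    (h4 : M e e = -1)
    (h5 : M (cst a) e = 1)
    (h6 : M (cst b) e = 1)
    (h7 : ∀ i : Fin (k - 1), i ≠ a → i ≠ b → M (cst i) e = 0) :
    ((∀ x : Fin k → ℝ, x ≠ 0 → dotProduct x (M.mulVec x) < 0) ↔
     (∀ x : Fin (k - 1) → ℝ, x ≠ 0 → dotProduct x (Mbar.mulVec x) < 0)) := by
  obtain ⟨n, rfl⟩ : ∃ n, k = n + 1 := ⟨k - 1, by omega⟩
  have hn : 2 ≤ n := by omega
  -- basic facts about the indices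
  have hcsti : ∀ i : Fin (n + 1 - 1), ((cst i : Fin (n+1)) : ℕ) = (i : ℕ) := by
    intro i; rw [hcst]; rfl
  have hilt : ∀ i : Fin (n + 1 - 1), (i : ℕ) < n := fun i => i.isLt
  have hane : a ≠ b := by
    intro h; apply_fun (Fin.val) at h; omega
  have hcinj : Function.Injective cst := by
    rw [hcst]; exact Fin.castLE_injective _
  have hce : ∀ i : Fin (n + 1 - 1), cst i ≠ e := by
    intro i h; apply_fun (Fin.val) at h
    have := hcsti i; have := hilt i; omega
  have hcover : ∀ i : Fin (n + 1), i = e ∨ ∃ i', cst i' = i := by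
    intro i
    by_cases h : (i : ℕ) < n
    · exact Or.inr ⟨⟨(i : ℕ), h⟩, Fin.ext (hcsti _)⟩
    · exact Or.inl (Fin.ext (by have := i.isLt; omega))
  -- the rank-one correction vector
  set v : Fin (n + 1) → ℝ := fun i =>
    (if i = cst a then 1 else 0) + (if i = cst b then 1 else 0) + (if i = e then -1 else 0)
    with hv
  have hcab : cst a ≠ cst b := fun h => hane (hcinj h)
  have hcba : cst b ≠ cst a := fun h => hane (Eq.symm (hcinj h))
  have heca : e ≠ cst a := fun h => hce a (Eq.symm h)
  have hecb : e ≠ cst b := fun h => hce b (Eq.symm h)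
  have hvca : v (cst a) = 1 := by simp [hv, hcab, hce a]
  have hvcb : v (cst b) = 1 := by simp [hv, hcba, hce b]
  have hve : v e = -1 := by simp [hv, heca, hecb]
  have hvc0 : ∀ i : Fin (n+1-1), i ≠ a → i ≠ b → v (cst i) = 0 := by
    intro i hia hib
    have h1 : cst i ≠ cst a := fun h => hia (hcinj h)
    have h2 : cst i ≠ cst b := fun h => hib (hcinj h)
    simp [hv, h1, h2, hce i]
  -- the extended matrix
  set L : Matrix (Fin (n+1)) (Fin (n+1)) ℝ := Matrix.of fun i j =>
    if hi : (i : ℕ) < n then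
      if hj : (j : ℕ) < n then Mbar ⟨(i : ℕ), hi⟩ ⟨(j : ℕ), hj⟩ else 0
    else 0 with hL
  have hLc : ∀ i j : Fin (n+1-1), L (cst i) (cst j) = Mbar i j := by
    intro i j
    have hi : ((cst i : Fin (n+1)) : ℕ) < n := by rw [hcsti]; exact hilt i
    have hj : ((cst j : Fin (n+1)) : ℕ) < n := by rw [hcsti]; exact hilt j
    rw [hL]
    simp only [Matrix.of_apply, dif_pos hi, dif_pos hj]
    congr 1 <;> exact Fin.ext (hcsti _)
  have hLe1 : ∀ j, L e j = 0 := by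
    intro j; rw [hL]
    simp only [Matrix.of_apply]
    rw [dif_neg (by omega : ¬ ((e : Fin (n+1)) : ℕ) < n)]
  have hLe2 : ∀ i, L i e = 0 := by
    intro i; rw [hL]
    simp only [Matrix.of_apply]
    split
    · rw [dif_neg (by omega : ¬ ((e : Fin (n+1)) : ℕ) < n)]
    · rfl
  -- key matrix identity
  have hMeq : M = L - Matrix.vecMulVec v v := by
    ext i j
    simp only [Matrix.sub_apply, Matrix.vecMulVec_apply]
    rcases hcover i with rfl | ⟨i', rfl⟩
    · rcases hcover j with rfl | ⟨j', rfl⟩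
      · rw [h4, hLe1, hve]; ring
      · rw [hMSymm.apply, hLe1, hve]
        by_cases hja : j' = a
        · subst hja; rw [h5, hvca]; ring
        · by_cases hjb : j' = b
          · subst hjb; rw [h6, hvcb]; ring
          · rw [h7 j' hja hjb, hvc0 j' hja hjb]; ring
    · rcases hcover j with rfl | ⟨j', rfl⟩
      · rw [hLe2]
        by_cases hia : i' = a
        · subst hia; rw [h5, hvca, hve]; ring
        · by_cases hib : i' = b
          · subst hib; rw [h6, hvcb, hve]; ring
          · rw [h7 i' hia hib, hvc0 i' hia hib, hve]; ring
      · rw [hLc]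
        by_cases hcase : (i' = a ∨ i' = b) ∧ (j' = a ∨ j' = b)
        · obtain ⟨hi', hj'⟩ := hcase
          rcases hi' with h | h <;> rcases hj' with h' | h' <;> rw [h, h']
          · rw [h1, hvca]; ring
          · rw [h3, hvca, hvcb, hab]; ring
          · have hba : M (cst b) (cst a) = 0 := by rw [hMSymm.apply, h3]
            have hba' : Mbar b a = 1 := by rw [hMbarSymm.apply, hab]
            rw [hba, hba', hvca, hvcb]; ring
          · rw [h2, hvcb]; ring
        · rw [h0 i' j' hcase]
          rcases not_and_or.mp hcase with h | h
          · push_neg at h; rw [hvc0 i' h.1 h.2]; ring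
          · push_neg at h; rw [hvc0 j' h.1 h.2]; ring
  -- quadratic form of the rank-one part
  have hsq : ∀ y : Fin (n+1) → ℝ,
      dotProduct y ((Matrix.vecMulVec v v).mulVec y) = (dotProduct v y)^2 := by
    intro y
    have h : (dotProduct v y)^2 = ∑ i, ∑ j, (v i * y i) * (v j * y j) := by
      rw [sq, dotProduct, Finset.sum_mul_sum]
    rw [h]
    simp only [dotProduct, Matrix.mulVec, Matrix.vecMulVec_apply, Finset.mul_sum]
    exact Finset.sum_congr rfl fun i _ => Finset.sum_congr rfl fun j _ => by ring
  have hvd : ∀ y : Fin (n+1) → ℝ,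
      dotProduct v y = y (cst a) + y (cst b) - y e := by
    intro y
    simp only [dotProduct, hv, add_mul, Finset.sum_add_distrib, ite_mul, one_mul,
      zero_mul, neg_mul, Finset.sum_ite_eq', Finset.mem_univ, if_true]
    ring
  -- quadratic form of the extension part
  have hlast : (Fin.last n : Fin (n+1)) = e := Fin.ext (by simp; omega)
  have hcs : ∀ j : Fin (n+1-1), (Fin.castSucc j : Fin (n+1)) = cst j :=
    fun j => Fin.ext (hcsti j).symm
  have hLq : ∀ y : Fin (n+1) → ℝ,
      dotProduct y (L.mulVec y) =
      dotProduct (fun i => y (cst i)) (Mbar.mulVec (fun i => y (cst i))) := by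
    intro y
    have hrow : ∀ i : Fin (n+1), ∑ j, L i j * y j
        = ∑ j : Fin (n+1-1), L i (cst j) * y (cst j) + L i e * y e := by
      intro i
      rw [Fin.sum_univ_castSucc]
      congr 1
      · exact Finset.sum_congr rfl fun j _ => by rw [hcs j]
      · rw [hlast]
    simp only [dotProduct, Matrix.mulVec]
    calc ∑ i : Fin (n+1), y i * ∑ j, L i j * y j
        = ∑ i : Fin (n+1-1), y (cst i) * ∑ j, L (cst i) j * y j
            + y e * ∑ j, L e j * y j := by
          rw [Fin.sum_univ_castSucc]
          congr 1
          · exact Finset.sum_congr rfl fun i _ => by rw [hcs i]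
          · rw [hlast]
      _ = ∑ i : Fin (n+1-1), y (cst i) * ∑ j : Fin (n+1-1), Mbar i j * y (cst j) := by
          rw [show ∑ j, L e j * y j = 0 by simp [hLe1]]
          rw [mul_zero, add_zero]
          refine Finset.sum_congr rfl fun i _ => ?_
          rw [hrow (cst i), hLe2, zero_mul, add_zero]
          congr 1
          exact Finset.sum_congr rfl fun j _ => by rw [hLc]
  -- the key identity
  have hQ : ∀ y : Fin (n+1) → ℝ,
      dotProduct y (M.mulVec y) =
      dotProduct (fun i => y (cst i)) (Mbar.mulVec (fun i => y (cst i)))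
        - (y (cst a) + y (cst b) - y e)^2 := by
    intro y
    rw [hMeq, Matrix.sub_mulVec, dotProduct_sub, hLq, hsq, hvd]
  -- conclusion
  constructor
  · intro hM x hx
    set y : Fin (n+1) → ℝ :=
      fun i => if h : (i : ℕ) < n then x ⟨(i : ℕ), h⟩ else x a + x b with hy
    have hyc : ∀ i : Fin (n+1-1), y (cst i) = x i := by
      intro i
      rw [hy]; dsimp only
      rw [dif_pos (show ((cst i : Fin (n+1)) : ℕ) < n by rw [hcsti]; exact hilt i)]
      congr 1
      exact Fin.ext (hcsti i)
    have hye : y e = x a + x b := by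
      rw [hy]; dsimp only
      rw [dif_neg (by omega : ¬ ((e : Fin (n+1)) : ℕ) < n)]
    have hy0 : y ≠ 0 := by
      intro h; apply hx; funext i
      have := congrFun h (cst i)
      rw [hyc i] at this; exact this
    have hlt := hM y hy0
    rw [hQ y] at hlt
    have hfn : (fun i => y (cst i)) = x := funext hyc
    rw [hfn, hyc a, hyc b, hye] at hlt
    have hz : (x a + x b - (x a + x b))^2 = 0 := by ring
    linarith [hlt, hz.le, hz.ge]
  · intro hm y hy
    rw [hQ y]
    by_cases hx : (fun i : Fin (n+1-1) => y (cst i)) = 0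
    · have hc0 : ∀ i, y (cst i) = 0 := fun i => congrFun hx i
      have hye : y e ≠ 0 := by
        intro h; apply hy; funext i
        rcases hcover i with rfl | ⟨i', rfl⟩
        · exact h
        · exact hc0 i'
      rw [hx, hc0 a, hc0 b, zero_dotProduct]
      have h3 : (y e)^2 ≠ 0 := pow_ne_zero 2 hye
      have h4 : (0:ℝ) ≤ (y e)^2 := sq_nonneg _
      have h5 : (0 + 0 - y e)^2 = (y e)^2 := by ring
      rw [h5]
      cases' lt_or_eq_of_le h4 with h h
      · linarith
      · exact absurd h.symm h3
    · have hlt := hm _ hx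
      have hs := sq_nonneg (y (cst a) + y (cst b) - y e)
      linarith
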